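/- The number of norm-4 vectors in the Niemeier lattice A_24 equals C(4,2)·C(25,4) + 2·C(25,5) = 75900 + 106260 = 182160, and they are exactly the vectors of type (1²,-1²,0^{21}) and ±(1/5^{20}, -4/5^5) up to permutation of coordinates. -/
import Mathlib

set_option maxRecDepth 8000

/-- The standard inner product on `ℚ^25`. -/
def qip (x y : Fin 25 → ℚ) : ℚ := ∑ i, x i * y i

/-- A rational vector with all coordinates integral. -/
def isIntVec (x : Fin 25 → ℚ) : Prop := ∀ i, ∃ m : ℤ, x i = (m : ℚ)

/-- The root lattice `A_24` inside `ℚ^25`. -/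
def A24set : Set (Fin 25 → ℚ) := {x | isIntVec x ∧ (∑ i, x i) = 0}

/-- The glue vector `g = (1/5^20, -4/5^5)`. -/
def glueA24 : Fin 25 → ℚ := fun i => if i.val < 20 then 1 / 5 else -(4 / 5)

/-- The Niemeier lattice `A_24`. -/
def NiemeierA24 : AddSubgroup (Fin 25 → ℚ) :=
  AddSubgroup.closure (A24set ∪ {glueA24})

/-- The template vector `(1², -1², 0^21)`. -/
def t4 : Fin 25 → ℚ := fun i => if i.val < 2 then 1 else if i.val < 4 then -1 else 0

open Finset

lemma exists_perm_comp (u t : Fin 25 → ℚ)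
    (h : ∀ c, (univ.filter (fun x => u x = c)).card = (univ.filter (fun x => t x = c)).card) :
    ∃ σ : Equiv.Perm (Fin 25), ∀ x, u x = t (σ x) := by
  have hcard : ∀ c : ℚ, Fintype.card {y // u y = c} = Fintype.card {y // t y = c} := by
    intro c
    rw [Fintype.card_subtype, Fintype.card_subtype]
    exact h c
  let e : ∀ c, {y // u y = c} ≃ {y // t y = c} := fun c => Fintype.equivOfCardEq (hcard c)
  let f : Fin 25 → Fin 25 := fun x => (e (u x) ⟨x, rfl⟩).val
  have hf : ∀ x, t (f x) = u x := fun x => (e (u x) ⟨x, rfl⟩).property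
  have aux : ∀ (y : Fin 25) {c d : ℚ} (hcd : c = d) (hyc : u y = c) (hyd : u y = d),
      (e c ⟨y, hyc⟩).val = (e d ⟨y, hyd⟩).val := by
    intro y c d hcd hyc hyd; subst hcd; rfl
  have hinj : Function.Injective f := by
    intro x y hxy
    have hc : u x = u y := by rw [← hf x, ← hf y, hxy]
    have h1 : f y = (e (u x) ⟨y, hc.symm⟩).val := aux y hc.symm rfl hc.symm
    have h2 : (e (u x) ⟨x, rfl⟩).val = (e (u x) ⟨y, hc.symm⟩).val := hxy.trans h1
    exact congrArg Subtype.val ((e (u x)).injective (Subtype.ext h2))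
  refine ⟨Equiv.ofBijective f ((Finite.injective_iff_bijective).mp hinj), fun x => (hf x).symm⟩

lemma fiber_three {u t : Fin 25 → ℚ} {a b c : ℚ} (hab : a ≠ b) (hac : a ≠ c) (hbc : b ≠ c)
    (hu : ∀ i, u i = a ∨ u i = b ∨ u i = c) (ht : ∀ i, t i = a ∨ t i = b ∨ t i = c)
    (ha : (univ.filter (fun i => u i = a)).card = (univ.filter (fun i => t i = a)).card)
    (hb : (univ.filter (fun i => u i = b)).card = (univ.filter (fun i => t i = b)).card) :
    ∀ d, (univ.filter (fun i => u i = d)).card = (univ.filter (fun i => t i = d)).card := by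
  have key : ∀ v : Fin 25 → ℚ, (∀ i, v i = a ∨ v i = b ∨ v i = c) →
      (univ.filter (fun i => v i = c))
        = (univ.filter (fun i => v i = a) ∪ univ.filter (fun i => v i = b))ᶜ := by
    intro v hv; ext i
    simp only [mem_filter, mem_univ, true_and, mem_compl, mem_union, not_or]
    rcases hv i with h|h|h <;>
      simp [h, hab, hac, hbc, hab.symm, hac.symm, hbc.symm]
  have hdisj : ∀ v : Fin 25 → ℚ,
      Disjoint (univ.filter (fun i => v i = a)) (univ.filter (fun i => v i = b)) := by
    intro v
    rw [Finset.disjoint_left]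
    intro i hia hib
    simp only [mem_filter] at hia hib
    exact hab (hia.2 ▸ hib.2 ▸ rfl)
  intro d
  by_cases hda : d = a
  · subst hda; exact ha
  by_cases hdb : d = b
  · subst hdb; exact hb
  by_cases hdc : d = c
  · subst hdc
    rw [key u hu, key t ht, card_compl, card_compl,
      card_union_of_disjoint (hdisj u), card_union_of_disjoint (hdisj t), ha, hb]
  · rw [filter_false_of_mem, filter_false_of_mem, card_empty]
    · intro i _
      rcases ht i with h|h|h <;> rw [h] <;> [exact fun hh => hda hh.symm; exact fun hh => hdb hh.symm; exact fun hh => hdc hh.symm]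
    · intro i _
      rcases hu i with h|h|h <;> rw [h] <;> [exact fun hh => hda hh.symm; exact fun hh => hdb hh.symm; exact fun hh => hdc hh.symm]

lemma card_filter_comp (σ : Equiv.Perm (Fin 25)) (p : Fin 25 → Prop) [DecidablePred p] :
    (univ.filter (fun i => p (σ i))).card = (univ.filter p).card := by
  apply Finset.card_bij (fun i _ => σ i)
  · intro a ha; simp only [mem_filter, mem_univ, true_and] at *; exact ha
  · intro a _ b _ hab; exact σ.injective hab
  · intro b hb
    refine ⟨σ.symm b, ?_, by simp⟩
    simp only [mem_filter, mem_univ, true_and, Equiv.apply_symm_apply] at *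
    exact hb

lemma sum_ite_mem_const (s : Finset (Fin 25)) (a b : ℚ) :
    ∑ i, (if i ∈ s then a else b) = s.card * (a - b) + 25 * b := by
  have h : ∀ i : Fin 25, (if i ∈ s then a else b) = (if i ∈ s then a - b else 0) + b := by
    intro i; split_ifs <;> ring
  rw [Finset.sum_congr rfl (fun i _ => h i), Finset.sum_add_distrib, Finset.sum_ite_mem,
    Finset.univ_inter, Finset.sum_const, Finset.sum_const, card_univ]
  simp [Fintype.card_fin, nsmul_eq_mul]

lemma glue_sum_zero : ∑ i, glueA24 i = 0 := by
  simp [Fin.sum_univ_succ, glueA24]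
  norm_num

def Nsub : AddSubgroup (Fin 25 → ℚ) where
  carrier := {x | (∑ i, x i) = 0 ∧ ∃ k : ℤ, ∀ i, ∃ m : ℤ, x i = m + k / 5}
  zero_mem' := ⟨by simp, 0, fun i => ⟨0, by simp⟩⟩
  add_mem' := by
    rintro a b ⟨ha, ka, hma⟩ ⟨hb, kb, hmb⟩
    refine ⟨?_, ka + kb, fun i => ?_⟩
    · show (∑ i, (a i + b i)) = 0
      rw [Finset.sum_add_distrib, ha, hb]; norm_num
    · obtain ⟨m1, h1⟩ := hma i
      obtain ⟨m2, h2⟩ := hmb i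
      refine ⟨m1 + m2, ?_⟩
      show a i + b i = _
      rw [h1, h2]; push_cast; ring
  neg_mem' := by
    rintro a ⟨ha, k, hm⟩
    refine ⟨?_, -k, fun i => ?_⟩
    · show (∑ i, (- a i)) = 0
      rw [Finset.sum_neg_distrib, ha]; norm_num
    · obtain ⟨m, h1⟩ := hm i
      refine ⟨-m, ?_⟩
      show - a i = _
      rw [h1]; push_cast; ring

lemma mem_N_iff (x : Fin 25 → ℚ) :
    x ∈ NiemeierA24 ↔ ((∑ i, x i) = 0 ∧ ∃ k : ℤ, ∀ i, ∃ m : ℤ, x i = m + k / 5) := by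
  constructor
  · intro hx
    have hle : NiemeierA24 ≤ Nsub := by
      rw [NiemeierA24, AddSubgroup.closure_le]
      rintro y (⟨hy1, hy2⟩ | rfl)
      · exact ⟨hy2, 0, fun i => by
          obtain ⟨m, hm⟩ := hy1 i
          exact ⟨m, by rw [hm]; norm_num⟩⟩
      · refine ⟨glue_sum_zero, 1, fun i => ?_⟩
        by_cases h : (i : ℕ) < 20
        · exact ⟨0, by simp [glueA24, h]⟩
        · exact ⟨-1, by simp [glueA24, h]; norm_num⟩
    exact hle hx
  · rintro ⟨h0, k, hm⟩
    have hg : glueA24 ∈ NiemeierA24 :=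
      AddSubgroup.subset_closure (Set.mem_union_right _ rfl)
    have h1 : x - k • glueA24 ∈ A24set := by
      constructor
      · intro i
        obtain ⟨m, hmi⟩ := hm i
        have happ : (x - k • glueA24) i = x i - (k : ℚ) * glueA24 i := by
          simp [Pi.sub_apply, Pi.smul_apply, zsmul_eq_mul]
        by_cases h : (i : ℕ) < 20
        · refine ⟨m, ?_⟩
          rw [happ, hmi]
          simp only [glueA24, h, if_true]
          push_cast; ring
        · refine ⟨m + k, ?_⟩
          rw [happ, hmi]
          simp only [glueA24, h, if_false]
          push_cast; ring
      · show (∑ i, (x i - k • glueA24 i)) = 0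
        rw [Finset.sum_sub_distrib, h0]
        simp only [zsmul_eq_mul]
        rw [← Finset.mul_sum, glue_sum_zero]
        ring
    have hx : x = (x - k • glueA24) + k • glueA24 := by abel
    rw [hx]
    exact AddSubgroup.add_mem _ (AddSubgroup.subset_closure (Set.mem_union_left _ h1))
      (AddSubgroup.zsmul_mem _ hg k)

lemma t4_vals (j : Fin 25) : t4 j = 1 ∨ t4 j = -1 ∨ t4 j = 0 := by
  unfold t4; split_ifs <;> simp

lemma glue_vals (j : Fin 25) : glueA24 j = 1/5 ∨ glueA24 j = -(4/5) := by
  unfold glueA24; split_ifs <;> simp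

lemma t4_card1 : (univ.filter (fun i => t4 i = 1)).card = 2 := by decide
lemma t4_cardm1 : (univ.filter (fun i => t4 i = -1)).card = 2 := by decide

lemma glue_cardm : (univ.filter (fun i => glueA24 i = -(4/5))).card = 5 := by
  have h : (univ.filter (fun i => glueA24 i = -(4/5)))
      = (univ.filter (fun i : Fin 25 => 20 ≤ i.val)) := by
    apply Finset.filter_congr
    intro i _
    unfold glueA24
    split_ifs with h <;> constructor <;> intro h2
    · norm_num at h2
    · omega
    · omega
    · rfl
  rw [h]; decide

lemma glue_cardp : (univ.filter (fun i => glueA24 i = 1/5)).card = 20 := by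
  have h : (univ.filter (fun i => glueA24 i = 1/5))
      = (univ.filter (fun i : Fin 25 => i.val < 20)) := by
    apply Finset.filter_congr
    intro i _
    unfold glueA24
    split_ifs with h <;> constructor <;> intro h2
    · exact h
    · rfl
    · norm_num at h2
    · omega
  rw [h]; decide

lemma negglue_cardp : (univ.filter (fun i => -glueA24 i = 4/5)).card = 5 := by
  have h : (univ.filter (fun i => -glueA24 i = 4/5))
      = (univ.filter (fun i => glueA24 i = -(4/5))) := by
    apply Finset.filter_congr
    intro i _
    constructor <;> intro h2 <;> linarith
  rw [h]; exact glue_cardm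

lemma negglue_cardm : (univ.filter (fun i => -glueA24 i = -(1/5))).card = 20 := by
  have h : (univ.filter (fun i => -glueA24 i = -(1/5)))
      = (univ.filter (fun i => glueA24 i = 1/5)) := by
    apply Finset.filter_congr
    intro i _
    constructor <;> intro h2 <;> linarith
  rw [h]; exact glue_cardp

lemma two_val_count {w : Fin 25 → ℤ} {x y : ℤ} (hxy : x ≠ y) (hval : ∀ i, w i = x ∨ w i = y) :
    ∑ i, w i = x * ((univ.filter (fun i => w i = x)).card : ℤ)
      + y * (25 - ((univ.filter (fun i => w i = x)).card : ℤ)) := by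
  have hsplit := Finset.sum_filter_add_sum_filter_not univ (fun i => w i = x) w
  have h1 : ∑ i ∈ univ.filter (fun i => w i = x), w i
      = ((univ.filter (fun i => w i = x)).card : ℤ) * x := by
    rw [Finset.sum_congr rfl (fun i hi => (Finset.mem_filter.mp hi).2), Finset.sum_const,
      nsmul_eq_mul]
  have h2 : ∑ i ∈ univ.filter (fun i => ¬ w i = x), w i
      = ((univ.filter (fun i => ¬ w i = x)).card : ℤ) * y := by
    rw [Finset.sum_congr rfl (fun i hi => ?_), Finset.sum_const, nsmul_eq_mul]
    rcases hval i with h | h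
    · exact absurd h (Finset.mem_filter.mp hi).2
    · exact h
  have h3 := Finset.card_filter_add_card_filter_not (s := (univ : Finset (Fin 25)))
    (p := fun i => w i = x)
  have h4 : (univ : Finset (Fin 25)).card = 25 := by simp
  rw [← hsplit, h1, h2]
  have hc : ((univ.filter (fun i => ¬ w i = x)).card : ℤ)
      = 25 - ((univ.filter (fun i => w i = x)).card : ℤ) := by omega
  rw [hc]; ring

lemma filter_eq_of_vals {w : Fin 25 → ℤ} {x y : ℤ} (hxy : x ≠ y) (hval : ∀ i, w i = x ∨ w i = y) :
    univ.filter (fun i => w i = y) = univ.filter (fun i => ¬ w i = x) := by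
  apply Finset.filter_congr
  intro i _
  rcases hval i with h | h <;> simp [h, hxy, hxy.symm]

lemma r0_count {w : Fin 25 → ℤ} (hval : ∀ i, w i = 5 ∨ w i = -5 ∨ w i = 0)
    (h0 : ∑ i, w i = 0) (h2 : ∑ i, (w i)^2 = 100) :
    (univ.filter (fun i => w i = 5)).card = 2 ∧ (univ.filter (fun i => w i = -5)).card = 2 := by
  have key : ∀ s : ℤ, (s = 5 ∨ s = -5) →
      (univ.filter (fun i => w i = s)).card = 2 := by
    intro s hs
    set v : Fin 25 → ℤ := fun i => s * w i + (w i)^2 with hvdef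
    have hvval : ∀ i, v i = 50 ∨ v i = 0 := by
      intro i
      simp only [hvdef]
      rcases hval i with h | h | h <;> rw [h] <;> rcases hs with hs | hs <;> rw [hs] <;> norm_num
    have hfil : univ.filter (fun i => v i = 50) = univ.filter (fun i => w i = s) := by
      apply Finset.filter_congr
      intro i _
      simp only [hvdef]
      rcases hval i with h | h | h <;> rw [h] <;> rcases hs with hs | hs <;> rw [hs] <;>
        constructor <;> intro hh <;> omega
    have hsum : ∑ i, v i = 100 := by
      simp only [hvdef]
      rw [Finset.sum_add_distrib, ← Finset.mul_sum, h0, h2]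
      ring
    have := two_val_count (by norm_num : (50:ℤ) ≠ 0) hvval
    rw [hsum] at this
    rw [← hfil]
    omega
  exact ⟨key 5 (Or.inl rfl), key (-5) (Or.inr rfl)⟩
lemma classify (u : Fin 25 → ℚ) (h0 : (∑ i, u i) = 0) (k : ℤ)
    (hm : ∀ i, ∃ m : ℤ, u i = m + k / 5) (h4 : ∑ i, u i * u i = 4) :
    ∃ σ : Equiv.Perm (Fin 25),
      u = (fun i => t4 (σ i)) ∨ u = (fun i => glueA24 (σ i)) ∨
        u = (fun i => -glueA24 (σ i)) := by
  choose m hmi using hm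
  set w : Fin 25 → ℤ := fun i => 5 * m i + k with hwdef
  have hw : ∀ i, (w i : ℚ) = 5 * u i := by
    intro i; rw [hmi i]; simp only [hwdef]; push_cast; ring
  have hu5 : ∀ i, u i = (w i : ℚ) / 5 := by intro i; rw [hw i]; ring
  have hw0 : ∑ i, w i = 0 := by
    have h : ((∑ i, w i : ℤ) : ℚ) = 0 := by
      push_cast
      rw [Finset.sum_congr rfl (fun i _ => hw i), ← Finset.mul_sum, h0, mul_zero]
    exact_mod_cast h
  have hw2 : ∑ i, (w i)^2 = 100 := by
    have h : ((∑ i, (w i)^2 : ℤ) : ℚ) = 100 := by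
      push_cast
      have he : ∀ i ∈ univ, ((w i : ℚ))^2 = 25 * (u i * u i) := by
        intro i _; rw [hw i]; ring
      rw [Finset.sum_congr rfl he, ← Finset.mul_sum, h4]
      norm_num
    exact_mod_cast h
  have hmod : ∀ i, w i % 5 = k % 5 := by intro i; simp only [hwdef]; omega
  have hbound : ∀ i, (w i)^2 ≤ 100 := by
    intro i
    calc (w i)^2 ≤ ∑ j, (w j)^2 :=
          Finset.single_le_sum (fun j _ => sq_nonneg (w j)) (mem_univ i)
    _ = 100 := hw2
  have hb10 : ∀ i, -10 ≤ w i ∧ w i ≤ 10 := by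
    intro i
    constructor <;> nlinarith [hbound i, sq_nonneg (w i + 10), sq_nonneg (w i - 10)]
  have hno10 : ∀ i, w i ≠ 10 ∧ w i ≠ -10 := by
    intro i
    have key : (w i)^2 = 100 → False := by
      intro hsq
      have hsp : (w i)^2 + ∑ j ∈ univ.erase i, (w j)^2 = ∑ j, (w j)^2 :=
        Finset.add_sum_erase univ (fun j => (w j)^2) (mem_univ i)
      have herase : ∑ j ∈ univ.erase i, (w j)^2 = 0 := by linarith [hw2, hsp]
      have hz : ∀ j ∈ univ.erase i, w j = 0 := by
        intro j hj
        have hzz := (Finset.sum_eq_zero_iff_of_nonneg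
          (fun j _ => sq_nonneg (w j))).mp herase j hj
        exact (pow_eq_zero_iff (by norm_num)).mp hzz
      have hsum : w i + ∑ j ∈ univ.erase i, w j = ∑ j, w j :=
        Finset.add_sum_erase univ w (mem_univ i)
      rw [Finset.sum_eq_zero hz, hw0, add_zero] at hsum
      rw [hsum] at hsq
      norm_num at hsq
    constructor <;> intro h <;> apply key <;> rw [h] <;> norm_num
  have hcases : k % 5 = 0 ∨ k % 5 = 1 ∨ k % 5 = 2 ∨ k % 5 = 3 ∨ k % 5 = 4 := by omega
  rcases hcases with hk | hk | hk | hk | hk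
  · -- residue 0 : t4 type
    have hval : ∀ i, w i = 5 ∨ w i = -5 ∨ w i = 0 := by
      intro i
      have h1 := hmod i
      have h2 := hb10 i
      have h3 := hno10 i
      omega
    obtain ⟨hA, hB⟩ := r0_count hval hw0 hw2
    have huval : ∀ i, u i = 1 ∨ u i = -1 ∨ u i = 0 := by
      intro i
      rcases hval i with h | h | h <;> rw [hu5 i, h] <;> norm_num
    have hfa : (univ.filter (fun i => u i = 1)).card
        = (univ.filter (fun i => t4 i = 1)).card := by
      have he : univ.filter (fun i => u i = 1) = univ.filter (fun i => w i = 5) := by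
        apply Finset.filter_congr
        intro i _
        rw [hu5 i]
        constructor
        · intro h; have : (w i : ℚ) = 5 := by linarith
          exact_mod_cast this
        · intro h; rw [h]; norm_num
      rw [he, hA, t4_card1]
    have hfb : (univ.filter (fun i => u i = -1)).card
        = (univ.filter (fun i => t4 i = -1)).card := by
      have he : univ.filter (fun i => u i = -1) = univ.filter (fun i => w i = -5) := by
        apply Finset.filter_congr
        intro i _
        rw [hu5 i]
        constructor
        · intro h; have : (w i : ℚ) = -5 := by linarith
          exact_mod_cast this
        · intro h; rw [h]; norm_num
      rw [he, hB, t4_cardm1]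
    have hfib := fiber_three (by norm_num : (1:ℚ) ≠ -1) (by norm_num : (1:ℚ) ≠ 0)
      (by norm_num : (-1:ℚ) ≠ 0) huval t4_vals hfa hfb
    obtain ⟨σ, hσ⟩ := exists_perm_comp u t4 hfib
    exact ⟨σ, Or.inl (funext hσ)⟩
  · -- residue 1 : glue type
    have hge : ∀ i, w i ≤ -4 ∨ 1 ≤ w i := by intro i; have := hmod i; omega
    have hquad : ∀ i, 0 ≤ (w i - 1) * (w i + 4) := by
      intro i
      rcases hge i with h | h <;> nlinarith
    have hsum : ∑ i, (w i - 1) * (w i + 4) = 0 := by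
      have hexp : ∀ i ∈ univ, (w i - 1) * (w i + 4) = (w i)^2 + 3 * w i - 4 :=
        fun i _ => by ring
      rw [Finset.sum_congr rfl hexp]
      have hs : ∑ i : Fin 25, ((w i)^2 + 3 * w i - 4)
          = (∑ i, (w i)^2) + 3 * (∑ i, w i) - 100 := by
        rw [Finset.sum_sub_distrib, Finset.sum_add_distrib, ← Finset.mul_sum, Finset.sum_const]
        simp
      rw [hs, hw0, hw2]
      ring
    have hval : ∀ i, w i = 1 ∨ w i = -4 := by
      intro i
      have h1 := (Finset.sum_eq_zero_iff_of_nonneg (fun j _ => hquad j)).mp hsum i (mem_univ i)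
      have h2 := mul_eq_zero.mp h1
      omega
    have hAcard : (univ.filter (fun i => w i = 1)).card = 20 := by
      have := two_val_count (by norm_num : (1:ℤ) ≠ -4) hval
      rw [hw0] at this
      omega
    have hBcard : (univ.filter (fun i => w i = -4)).card = 5 := by
      rw [filter_eq_of_vals (by norm_num : (1:ℤ) ≠ -4) hval]
      have h3 := Finset.card_filter_add_card_filter_not (s := (univ : Finset (Fin 25)))
        (p := fun i => w i = 1)
      have h4 : (univ : Finset (Fin 25)).card = 25 := by simp
      omega
    have huval : ∀ i, u i = 1/5 ∨ u i = -(4/5) := by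
      intro i
      rcases hval i with h | h <;> rw [hu5 i, h] <;> norm_num
    have hfa : (univ.filter (fun i => u i = 1/5)).card
        = (univ.filter (fun i => glueA24 i = 1/5)).card := by
      have he : univ.filter (fun i => u i = 1/5) = univ.filter (fun i => w i = 1) := by
        apply Finset.filter_congr
        intro i _
        rw [hu5 i]
        constructor
        · intro h; have : (w i : ℚ) = 1 := by linarith
          exact_mod_cast this
        · intro h; rw [h]; norm_num
      rw [he, hAcard, glue_cardp]
    have hfb : (univ.filter (fun i => u i = -(4/5))).card
        = (univ.filter (fun i => glueA24 i = -(4/5))).card := by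
      have he : univ.filter (fun i => u i = -(4/5)) = univ.filter (fun i => w i = -4) := by
        apply Finset.filter_congr
        intro i _
        rw [hu5 i]
        constructor
        · intro h; have : (w i : ℚ) = -4 := by linarith
          exact_mod_cast this
        · intro h; rw [h]; norm_num
      rw [he, hBcard, glue_cardm]
    have hfib := fiber_three (by norm_num : (1/5:ℚ) ≠ -(4/5)) (by norm_num : (1/5:ℚ) ≠ 7)
      (by norm_num : (-(4/5):ℚ) ≠ 7)
      (fun i => (huval i).imp id Or.inl)
      (fun i => (glue_vals i).imp id Or.inl) hfa hfb
    obtain ⟨σ, hσ⟩ := exists_perm_comp u glueA24 hfib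
    exact ⟨σ, Or.inr (Or.inl (funext hσ))⟩
  · -- residue 2 : impossible
    exfalso
    have hge : ∀ i, w i ≤ -3 ∨ 2 ≤ w i := by intro i; have := hmod i; omega
    have hquad : ∀ i, 0 ≤ (w i + 3) * (w i - 2) := by
      intro i
      rcases hge i with h | h <;> nlinarith
    have hpos : (0:ℤ) ≤ ∑ i, (w i + 3) * (w i - 2) :=
      Finset.sum_nonneg (fun i _ => hquad i)
    have hsum : ∑ i, (w i + 3) * (w i - 2) = -50 := by
      have hexp : ∀ i ∈ univ, (w i + 3) * (w i - 2) = (w i)^2 + w i - 6 :=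
        fun i _ => by ring
      rw [Finset.sum_congr rfl hexp]
      have hs : ∑ i : Fin 25, ((w i)^2 + w i - 6)
          = (∑ i, (w i)^2) + (∑ i, w i) - 150 := by
        rw [Finset.sum_sub_distrib, Finset.sum_add_distrib, Finset.sum_const]
        simp
      rw [hs, hw0, hw2]
      norm_num
    omega
  · -- residue 3 : impossible
    exfalso
    have hge : ∀ i, w i ≤ -2 ∨ 3 ≤ w i := by intro i; have := hmod i; omega
    have hquad : ∀ i, 0 ≤ (w i + 2) * (w i - 3) := by
      intro i
      rcases hge i with h | h <;> nlinarith
    have hpos : (0:ℤ) ≤ ∑ i, (w i + 2) * (w i - 3) :=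
      Finset.sum_nonneg (fun i _ => hquad i)
    have hsum : ∑ i, (w i + 2) * (w i - 3) = -50 := by
      have hexp : ∀ i ∈ univ, (w i + 2) * (w i - 3) = (w i)^2 - w i - 6 :=
        fun i _ => by ring
      rw [Finset.sum_congr rfl hexp]
      have hs : ∑ i : Fin 25, ((w i)^2 - w i - 6)
          = (∑ i, (w i)^2) - (∑ i, w i) - 150 := by
        rw [Finset.sum_sub_distrib, Finset.sum_sub_distrib, Finset.sum_const]
        simp
      rw [hs, hw0, hw2]
      norm_num
    omega
  · -- residue 4 : -glue type
    have hge : ∀ i, w i ≤ -1 ∨ 4 ≤ w i := by intro i; have := hmod i; omega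
    have hquad : ∀ i, 0 ≤ (w i + 1) * (w i - 4) := by
      intro i
      rcases hge i with h | h <;> nlinarith
    have hsum : ∑ i, (w i + 1) * (w i - 4) = 0 := by
      have hexp : ∀ i ∈ univ, (w i + 1) * (w i - 4) = (w i)^2 - 3 * w i - 4 :=
        fun i _ => by ring
      rw [Finset.sum_congr rfl hexp]
      have hs : ∑ i : Fin 25, ((w i)^2 - 3 * w i - 4)
          = (∑ i, (w i)^2) - 3 * (∑ i, w i) - 100 := by
        rw [Finset.sum_sub_distrib, Finset.sum_sub_distrib, ← Finset.mul_sum, Finset.sum_const]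
        simp
      rw [hs, hw0, hw2]
      ring
    have hval : ∀ i, w i = -1 ∨ w i = 4 := by
      intro i
      have h1 := (Finset.sum_eq_zero_iff_of_nonneg (fun j _ => hquad j)).mp hsum i (mem_univ i)
      have h2 := mul_eq_zero.mp h1
      omega
    have hAcard : (univ.filter (fun i => w i = -1)).card = 20 := by
      have := two_val_count (by norm_num : (-1:ℤ) ≠ 4) hval
      rw [hw0] at this
      omega
    have hBcard : (univ.filter (fun i => w i = 4)).card = 5 := by
      rw [filter_eq_of_vals (by norm_num : (-1:ℤ) ≠ 4) hval]
      have h3 := Finset.card_filter_add_card_filter_not (s := (univ : Finset (Fin 25)))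
        (p := fun i => w i = -1)
      have h4 : (univ : Finset (Fin 25)).card = 25 := by simp
      omega
    have huval : ∀ i, u i = -(1/5) ∨ u i = 4/5 := by
      intro i
      rcases hval i with h | h <;> rw [hu5 i, h] <;> norm_num
    have hfa : (univ.filter (fun i => u i = -(1/5))).card
        = (univ.filter (fun i => -glueA24 i = -(1/5))).card := by
      have he : univ.filter (fun i => u i = -(1/5)) = univ.filter (fun i => w i = -1) := by
        apply Finset.filter_congr
        intro i _
        rw [hu5 i]
        constructor
        · intro h; have : (w i : ℚ) = -1 := by linarith
          exact_mod_cast this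
        · intro h; rw [h]; norm_num
      rw [he, hAcard, negglue_cardm]
    have hfb : (univ.filter (fun i => u i = 4/5)).card
        = (univ.filter (fun i => -glueA24 i = 4/5)).card := by
      have he : univ.filter (fun i => u i = 4/5) = univ.filter (fun i => w i = 4) := by
        apply Finset.filter_congr
        intro i _
        rw [hu5 i]
        constructor
        · intro h; have : (w i : ℚ) = 4 := by linarith
          exact_mod_cast this
        · intro h; rw [h]; norm_num
      rw [he, hBcard, negglue_cardp]
    have hnegglue_vals : ∀ j, -glueA24 j = -(1/5) ∨ -glueA24 j = 4/5 := by
      intro j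
      rcases glue_vals j with h | h <;> rw [h] <;> norm_num
    have hfib := fiber_three (by norm_num : (-(1/5):ℚ) ≠ 4/5) (by norm_num : (-(1/5):ℚ) ≠ 7)
      (by norm_num : (4/5:ℚ) ≠ 7)
      (fun i => (huval i).imp id Or.inl)
      (fun i => (hnegglue_vals i).imp id Or.inl) hfa hfb
    obtain ⟨σ, hσ⟩ := exists_perm_comp u (fun j => -glueA24 j) hfib
    exact ⟨σ, Or.inr (Or.inr (funext hσ))⟩

/-! ### The finite sets of norm-4 vectors -/

def vec2 (p : (_ : Finset (Fin 25)) × Finset (Fin 25)) : Fin 25 → ℚ :=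
  fun i => if i ∈ p.1 then 1 else if i ∈ p.2 then -1 else 0

def base1 : Finset ((_ : Finset (Fin 25)) × Finset (Fin 25)) :=
  (univ.powersetCard 2).sigma (fun A => (Aᶜ.powersetCard 2))

noncomputable def F1 : Finset (Fin 25 → ℚ) := base1.image vec2

def vecg (s : Finset (Fin 25)) : Fin 25 → ℚ := fun i => if i ∈ s then -(4/5) else 1/5

noncomputable def F2 : Finset (Fin 25 → ℚ) := (univ.powersetCard 5).image vecg

noncomputable def F3 : Finset (Fin 25 → ℚ) := F2.image (fun f => -f)

lemma mem_base1 {p : (_ : Finset (Fin 25)) × Finset (Fin 25)} :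
    p ∈ base1 ↔ p.1.card = 2 ∧ p.2 ⊆ p.1ᶜ ∧ p.2.card = 2 := by
  unfold base1
  rw [Finset.mem_sigma, Finset.mem_powersetCard, Finset.mem_powersetCard]
  constructor
  · rintro ⟨⟨-, h1⟩, h2, h3⟩; exact ⟨h1, h2, h3⟩
  · rintro ⟨h1, h2, h3⟩; exact ⟨⟨subset_univ _, h1⟩, h2, h3⟩

lemma vec2_vals (p) (i : Fin 25) : vec2 p i = 1 ∨ vec2 p i = -1 ∨ vec2 p i = 0 := by
  unfold vec2; split_ifs <;> simp

lemma vecg_vals (s : Finset (Fin 25)) (i : Fin 25) :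
    vecg s i = -(4/5) ∨ vecg s i = 1/5 := by
  unfold vecg; split_ifs <;> simp

lemma vec2_eq_one {p} (hp : p ∈ base1) (i : Fin 25) : vec2 p i = 1 ↔ i ∈ p.1 := by
  unfold vec2
  split_ifs with h1 h2 <;> simp [h1]
  · norm_num
lemma vec2_eq_negone {p} (hp : p ∈ base1) (i : Fin 25) : vec2 p i = -1 ↔ i ∈ p.2 := by
  obtain ⟨-, hsub, -⟩ := mem_base1.mp hp
  unfold vec2
  split_ifs with h1 h2
  · constructor
    · intro h; norm_num at h
    · intro h; exact absurd h1 (Finset.mem_compl.mp (hsub h))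
  · simp [h2]
  · simp [h1, h2]

lemma vecg_eq_neg {s : Finset (Fin 25)} (i : Fin 25) : vecg s i = -(4/5) ↔ i ∈ s := by
  unfold vecg
  split_ifs with h <;> simp [h]
  norm_num

lemma F1_card : F1.card = 75900 := by
  have hinj : Set.InjOn vec2 base1 := by
    intro p hp q hq h
    have h1 : p.1 = q.1 := by
      ext i
      rw [← vec2_eq_one hp i, ← vec2_eq_one hq i, h]
    have h2 : p.2 = q.2 := by
      ext i
      rw [← vec2_eq_negone hp i, ← vec2_eq_negone hq i, h]
    exact Sigma.ext h1 (heq_of_eq h2)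
  rw [F1, Finset.card_image_of_injOn hinj, base1, Finset.card_sigma]
  have h : ∀ A ∈ univ.powersetCard 2, ((Aᶜ : Finset (Fin 25)).powersetCard 2).card = 253 := by
    intro A hA
    have hAc : A.card = 2 := (Finset.mem_powersetCard.mp hA).2
    rw [Finset.card_powersetCard, Finset.card_compl, hAc]
    decide
  rw [Finset.sum_congr rfl h, Finset.sum_const, Finset.card_powersetCard, card_univ]
  decide

lemma F2_card : F2.card = 53130 := by
  have hinj : Set.InjOn vecg ((univ.powersetCard 5 : Finset (Finset (Fin 25))) : Set (Finset (Fin 25))) := by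
    intro s _ t _ h
    ext i
    rw [← vecg_eq_neg (s := s) i, ← vecg_eq_neg (s := t) i, h]
  rw [F2, Finset.card_image_of_injOn hinj, Finset.card_powersetCard, card_univ]
  decide

lemma F3_card : F3.card = 53130 := by
  rw [F3, Finset.card_image_of_injective _ neg_injective, F2_card]

/-! ### F ⊆ norm-4 set -/

lemma vec2_mem {p} (hp : p ∈ base1) :
    vec2 p ∈ NiemeierA24 ∧ qip (vec2 p) (vec2 p) = 4 := by
  obtain ⟨hc1, hsub, hc2⟩ := mem_base1.mp hp
  have hdisj : ∀ i, i ∈ p.2 → i ∉ p.1 := fun i h => Finset.mem_compl.mp (hsub h)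
  constructor
  · rw [mem_N_iff]
    refine ⟨?_, 0, fun i => ?_⟩
    · have hpt : ∀ i : Fin 25, vec2 p i
          = (if i ∈ p.1 then (1:ℚ) else 0) + (if i ∈ p.2 then -1 else 0) := by
        intro i
        by_cases h2 : i ∈ p.2
        · have h1 : i ∉ p.1 := hdisj i h2
          simp [vec2, h1, h2]
        · by_cases h1 : i ∈ p.1 <;> simp [vec2, h1, h2]
      rw [Finset.sum_congr rfl (fun i _ => hpt i), Finset.sum_add_distrib,
        Finset.sum_ite_mem, Finset.sum_ite_mem, univ_inter, univ_inter,
        Finset.sum_const, Finset.sum_const, hc1, hc2]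
      norm_num
    · rcases vec2_vals p i with h | h | h <;> rw [h]
      exacts [⟨1, by norm_num⟩, ⟨-1, by norm_num⟩, ⟨0, by norm_num⟩]
  · unfold qip
    have hpt : ∀ i : Fin 25, vec2 p i * vec2 p i
        = (if i ∈ p.1 then (1:ℚ) else 0) + (if i ∈ p.2 then 1 else 0) := by
      intro i
      by_cases h2 : i ∈ p.2
      · have h1 : i ∉ p.1 := hdisj i h2
        simp [vec2, h1, h2]
      · by_cases h1 : i ∈ p.1 <;> simp [vec2, h1, h2]
    rw [Finset.sum_congr rfl (fun i _ => hpt i), Finset.sum_add_distrib,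
      Finset.sum_ite_mem, Finset.sum_ite_mem, univ_inter, univ_inter,
      Finset.sum_const, Finset.sum_const, hc1, hc2]
    norm_num

lemma vecg_mem {s : Finset (Fin 25)} (hs : s.card = 5) :
    vecg s ∈ NiemeierA24 ∧ qip (vecg s) (vecg s) = 4 := by
  constructor
  · rw [mem_N_iff]
    refine ⟨?_, 1, fun i => ?_⟩
    · have := sum_ite_mem_const s (-(4/5)) (1/5)
      rw [show (∑ i, vecg s i) = ∑ i, (if i ∈ s then -(4/5 : ℚ) else 1/5) from rfl, this, hs]
      norm_num
    · rcases vecg_vals s i with h | h <;> rw [h]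
      exacts [⟨-1, by norm_num⟩, ⟨0, by norm_num⟩]
  · unfold qip
    have hpt : ∀ i : Fin 25, vecg s i * vecg s i
        = (if i ∈ s then (16/25 : ℚ) else 1/25) := by
      intro i
      by_cases h : i ∈ s <;> simp [vecg, h] <;> norm_num
    rw [Finset.sum_congr rfl (fun i _ => hpt i), sum_ite_mem_const, hs]
    norm_num

lemma qip_neg (f : Fin 25 → ℚ) : qip (-f) (-f) = qip f f := by
  unfold qip
  apply Finset.sum_congr rfl
  intro i _
  simp

/-! ### perm set ⊆ F -/

lemma perm_t4_mem_F1 (σ : Equiv.Perm (Fin 25)) : (fun i => t4 (σ i)) ∈ F1 := by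
  refine Finset.mem_image.mpr ⟨⟨univ.filter (fun i => t4 (σ i) = 1),
    univ.filter (fun i => t4 (σ i) = -1)⟩, ?_, ?_⟩
  · rw [mem_base1]
    refine ⟨?_, ?_, ?_⟩
    · rw [card_filter_comp σ (fun j => t4 j = 1)]; exact t4_card1
    · intro i hi
      simp only [mem_filter, mem_univ, true_and] at hi
      rw [Finset.mem_compl, mem_filter]
      rintro ⟨-, h1⟩
      rw [h1] at hi; norm_num at hi
    · rw [card_filter_comp σ (fun j => t4 j = -1)]; exact t4_cardm1
  · funext i
    rcases t4_vals (σ i) with h | h | h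
    · have hA : i ∈ univ.filter (fun j => t4 (σ j) = 1) := by
        simp only [mem_filter, mem_univ, true_and]; exact h
      simp [vec2, hA, h]
    · have hA : i ∉ univ.filter (fun j => t4 (σ j) = 1) := by
        simp only [mem_filter, mem_univ, true_and, h]; norm_num
      have hB : i ∈ univ.filter (fun j => t4 (σ j) = -1) := by
        simp only [mem_filter, mem_univ, true_and]; exact h
      simp [vec2, hA, hB, h]
    · have hA : i ∉ univ.filter (fun j => t4 (σ j) = 1) := by
        simp only [mem_filter, mem_univ, true_and, h]; norm_num
      have hB : i ∉ univ.filter (fun j => t4 (σ j) = -1) := by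
        simp only [mem_filter, mem_univ, true_and, h]; norm_num
      simp [vec2, hA, hB, h]

lemma perm_glue_mem_F2 (σ : Equiv.Perm (Fin 25)) : (fun i => glueA24 (σ i)) ∈ F2 := by
  refine Finset.mem_image.mpr ⟨univ.filter (fun i => glueA24 (σ i) = -(4/5)), ?_, ?_⟩
  · rw [Finset.mem_powersetCard]
    refine ⟨subset_univ _, ?_⟩
    rw [card_filter_comp σ (fun j => glueA24 j = -(4/5))]
    exact glue_cardm
  · funext i
    rcases glue_vals (σ i) with h | h
    · have hA : i ∉ univ.filter (fun j => glueA24 (σ j) = -(4/5)) := by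
        simp only [mem_filter, mem_univ, true_and, h]; norm_num
      simp [vecg, hA, h]
    · have hA : i ∈ univ.filter (fun j => glueA24 (σ j) = -(4/5)) := by
        simp only [mem_filter, mem_univ, true_and]; exact h
      simp [vecg, hA, h]

lemma perm_negglue_mem_F3 (σ : Equiv.Perm (Fin 25)) : (fun i => -glueA24 (σ i)) ∈ F3 := by
  refine Finset.mem_image.mpr ⟨(fun i => glueA24 (σ i)), perm_glue_mem_F2 σ, ?_⟩
  funext i; simp

/-! ### Disjointness -/

lemma F1_disj_F2 : Disjoint F1 F2 := by
  rw [Finset.disjoint_left]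
  rintro f hf1 hf2
  obtain ⟨p, -, hp⟩ := Finset.mem_image.mp hf1
  obtain ⟨s, -, hs⟩ := Finset.mem_image.mp hf2
  have h1 := vec2_vals p 0
  rw [hp] at h1
  have h2 := vecg_vals s 0
  rw [hs] at h2
  rcases h1 with h | h | h <;> rcases h2 with h' | h' <;> rw [h] at h' <;> norm_num at h'

lemma F12_disj_F3 : Disjoint (F1 ∪ F2) F3 := by
  rw [Finset.disjoint_left]
  rintro f hf12 hf3
  obtain ⟨g, hg, hgf⟩ := Finset.mem_image.mp hf3
  obtain ⟨s, -, hs⟩ := Finset.mem_image.mp hg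
  have h2 : f 0 = 4/5 ∨ f 0 = -(1/5) := by
    rw [← hgf, ← hs]
    rcases vecg_vals s 0 with h | h <;> rw [Pi.neg_apply, h] <;> norm_num
  rcases Finset.mem_union.mp hf12 with hf | hf
  · obtain ⟨p, -, hp⟩ := Finset.mem_image.mp hf
    have h1 := vec2_vals p 0
    rw [hp] at h1
    rcases h1 with h | h | h <;> rcases h2 with h' | h' <;> rw [h] at h' <;> norm_num at h'
  · obtain ⟨s', -, hs'⟩ := Finset.mem_image.mp hf
    have h1 := vecg_vals s' 0
    rw [hs'] at h1
    rcases h1 with h | h <;> rcases h2 with h' | h' <;> rw [h] at h' <;> norm_num at h'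

/-! ### The three inclusions -/

lemma sub_SP : {u : Fin 25 → ℚ | u ∈ NiemeierA24 ∧ qip u u = 4} ⊆
    {u : Fin 25 → ℚ | ∃ σ : Equiv.Perm (Fin 25),
      u = (fun i => t4 (σ i)) ∨ u = (fun i => glueA24 (σ i)) ∨
      u = (fun i => -glueA24 (σ i))} := by
  rintro u ⟨hu, h4⟩
  rw [mem_N_iff] at hu
  obtain ⟨h0, k, hm⟩ := hu
  exact classify u h0 k hm h4

lemma sub_PF : {u : Fin 25 → ℚ | ∃ σ : Equiv.Perm (Fin 25),
      u = (fun i => t4 (σ i)) ∨ u = (fun i => glueA24 (σ i)) ∨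
      u = (fun i => -glueA24 (σ i))} ⊆ ↑(F1 ∪ F2 ∪ F3) := by
  rintro u ⟨σ, h | h | h⟩ <;> subst h <;>
    simp only [Finset.coe_union, Set.mem_union, Finset.mem_coe]
  · exact Or.inl (Or.inl (perm_t4_mem_F1 σ))
  · exact Or.inl (Or.inr (perm_glue_mem_F2 σ))
  · exact Or.inr (perm_negglue_mem_F3 σ)

lemma sub_FS : ↑(F1 ∪ F2 ∪ F3) ⊆ {u : Fin 25 → ℚ | u ∈ NiemeierA24 ∧ qip u u = 4} := by
  intro f hf
  simp only [Finset.coe_union, Set.mem_union, Finset.mem_coe] at hf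
  rcases hf with (hf | hf) | hf
  · obtain ⟨p, hp, hpf⟩ := Finset.mem_image.mp hf
    rw [← hpf]
    exact vec2_mem hp
  · obtain ⟨s, hs, hsf⟩ := Finset.mem_image.mp hf
    rw [← hsf]
    exact vecg_mem (Finset.mem_powersetCard.mp hs).2
  · obtain ⟨g, hg, hgf⟩ := Finset.mem_image.mp hf
    obtain ⟨s, hs, hsf⟩ := Finset.mem_image.mp hg
    rw [← hgf, ← hsf]
    have := vecg_mem (Finset.mem_powersetCard.mp hs).2
    exact ⟨AddSubgroup.neg_mem _ this.1, by rw [qip_neg]; exact this.2⟩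

/-! ### Main theorem -/

/-- The number of norm-4 vectors in the Niemeier lattice `A_24` equals
`C(4,2)·C(25,4) + 2·C(25,5) = 75900 + 106260 = 182160`, and they are exactly the
vectors of type `(1²,-1²,0^21)` and `±(1/5^20, -4/5^5)` up to permutation of
coordinates. -/
theorem niemeierA24_norm4 :
    Nat.choose 4 2 * Nat.choose 25 4 = 75900 ∧
    2 * Nat.choose 25 5 = 106260 ∧
    Nat.card {u : Fin 25 → ℚ | u ∈ NiemeierA24 ∧ qip u u = 4} = 182160 ∧
    {u : Fin 25 → ℚ | u ∈ NiemeierA24 ∧ qip u u = 4} =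
      {u : Fin 25 → ℚ | ∃ σ : Equiv.Perm (Fin 25),
        u = (fun i => t4 (σ i)) ∨ u = (fun i => glueA24 (σ i)) ∨
        u = (fun i => -glueA24 (σ i))} := by
  have hSF : {u : Fin 25 → ℚ | u ∈ NiemeierA24 ∧ qip u u = 4} = ↑(F1 ∪ F2 ∪ F3) :=
    Set.Subset.antisymm (fun u hu => sub_PF (sub_SP hu)) sub_FS
  refine ⟨by decide, by decide, ?_, ?_⟩
  · rw [hSF, Nat.card_coe_set_eq, Set.ncard_coe_finset,
      Finset.card_union_of_disjoint F12_disj_F3,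
      Finset.card_union_of_disjoint F1_disj_F2, F1_card, F2_card, F3_card]
  · exact Set.Subset.antisymm sub_SP (fun u hu => sub_FS (sub_PF hu))
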